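/- Let G be a connected identifiable graph of order n >= 3 with maximum degree Δ >= 3, and suppose that deleting some set of t edges from G yields a triangle-free graph. Assuming that every connected identifiable triangle-free graph H of order at least 3 with maximum degree at most Δ satisfies γ^ID(H) <= ((Δ-1)/Δ)·|V(H)| + 1/Δ, it follows that γ^ID(G) <= ((Δ-1)/Δ)·n + 4t + 1/Δ. -/

import Mathlib

open SimpleGraph

/-- The closed neighborhood of a vertex. -/
def cnbr {V : Type*} (G : SimpleGraph V) (v : V) : Set V := insert v (G.neighborSet v)

/-- `C` is an identifying code of `G`: every vertex is dominated by `C` and the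
closed-neighborhood traces on `C` are pairwise distinct. -/
def IsIdCode {V : Type*} (G : SimpleGraph V) (C : Set V) : Prop :=
  (∀ v, (cnbr G v ∩ C).Nonempty) ∧
  ∀ u v : V, cnbr G u ∩ C = cnbr G v ∩ C → u = v

/-- The minimum size of an identifying code of `G`. -/
noncomputable def gammaID {V : Type*} (G : SimpleGraph V) : ℕ :=
  sInf {n | ∃ C : Set V, IsIdCode G C ∧ C.ncard = n}

lemma cnbr_mono {V : Type*} {G H : SimpleGraph V} (h : G ≤ H) (v : V) :
    cnbr G v ⊆ cnbr H v := by
  intro x hx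
  rcases hx with rfl | hx
  · exact Set.mem_insert _ _
  · exact Set.mem_insert_of_mem _ (h hx)

lemma cnbr_deleteEdges_of_not_mem {V : Type*} {G : SimpleGraph V} {S : Set (Sym2 V)} {v : V}
    (hv : ∀ e ∈ S, v ∉ e) : cnbr (G.deleteEdges S) v = cnbr G v := by
  unfold cnbr
  congr 1
  ext x
  simp only [mem_neighborSet, deleteEdges_adj]
  constructor
  · exact fun h => h.1
  · intro h
    refine ⟨h, fun hmem => hv _ hmem ?_⟩
    exact Sym2.mem_mk_left v x

/-- Completion lemma: a dominating set whose trace function has a large range can be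
completed to an identifying code by adding few vertices. -/
lemma completion {V : Type*} [Fintype V] (G : SimpleGraph V)
    (hid : ∀ a b : V, cnbr G a = cnbr G b → a = b) :
    ∀ (k : ℕ) (C : Set V), (∀ v, (cnbr G v ∩ C).Nonempty) →
      Fintype.card V ≤ k + (Set.range fun v => cnbr G v ∩ C).ncard →
      ∃ C', IsIdCode G C' ∧ C'.ncard ≤ C.ncard + k := by
  intro k
  induction k with
  | zero =>
    intro C hdom hcard
    by_cases hinj : ∀ u v : V, cnbr G u ∩ C = cnbr G v ∩ C → u = v
    · exact ⟨C, ⟨hdom, hinj⟩, le_refl _⟩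
    · exfalso
      push_neg at hinj
      obtain ⟨u, v, hEq, huv⟩ := hinj
      -- range ⊆ image of univ \ {v}
      have hsub : (Set.range fun w => cnbr G w ∩ C) ⊆
          (fun w => cnbr G w ∩ C) '' (Set.univ \ {v}) := by
        rintro s ⟨x, rfl⟩
        by_cases hx : x = v
        · refine ⟨u, ⟨Set.mem_univ _, fun h => huv (h : u = v)⟩, ?_⟩
          show cnbr G u ∩ C = cnbr G x ∩ C
          rw [hx]; exact hEq
        · exact ⟨x, ⟨Set.mem_univ _, hx⟩, rfl⟩
      have h1 : (Set.range fun w => cnbr G w ∩ C).ncard ≤ (Set.univ \ {v} : Set V).ncard :=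
        le_trans (Set.ncard_le_ncard hsub (Set.toFinite _)) (Set.ncard_image_le (Set.toFinite _))
      have h2 : ((Set.univ \ {v} : Set V)).ncard + 1 = (Set.univ : Set V).ncard :=
        Set.ncard_diff_singleton_add_one (Set.mem_univ v) (Set.toFinite _)
      have h3 : (Set.univ : Set V).ncard = Fintype.card V := by
        rw [Set.ncard_univ, Nat.card_eq_fintype_card]
      omega
  | succ k ih =>
    intro C hdom hcard
    by_cases hinj : ∀ u v : V, cnbr G u ∩ C = cnbr G v ∩ C → u = v
    · exact ⟨C, ⟨hdom, hinj⟩, Nat.le_add_right _ _⟩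
    · push_neg at hinj
      obtain ⟨u, v, hEq, huv⟩ := hinj
      have hne : cnbr G u ≠ cnbr G v := fun h => huv (hid u v h)
      have hw : ∃ w, (w ∈ cnbr G u ∧ w ∉ cnbr G v) ∨ (w ∈ cnbr G v ∧ w ∉ cnbr G u) := by
        by_contra hco
        push_neg at hco
        exact hne (Set.ext fun w => ⟨fun h => (hco w).1 h, fun h => (hco w).2 h⟩)
      -- core argument, symmetric in u, v
      have core : ∀ u v : V, u ≠ v → cnbr G u ∩ C = cnbr G v ∩ C →
          ∀ w, w ∈ cnbr G u → w ∉ cnbr G v →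
          ∃ C', IsIdCode G C' ∧ C'.ncard ≤ C.ncard + (k + 1) := by
        clear hne hEq huv hw
        intro u v huv hEq w hw1 hw2
        set C₂ : Set V := insert w C with hC₂
        have hdom₂ : ∀ x, (cnbr G x ∩ C₂).Nonempty := fun x =>
          (hdom x).mono (Set.inter_subset_inter_right _ (Set.subset_insert _ _))
        have hgC : ∀ x, (cnbr G x ∩ C₂) ∩ C = cnbr G x ∩ C := by
          intro x
          ext y
          constructor
          · rintro ⟨⟨h1, _⟩, h2⟩; exact ⟨h1, h2⟩
          · rintro ⟨h1, h2⟩; exact ⟨⟨h1, Set.mem_insert_of_mem _ h2⟩, h2⟩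
        have hne₂ : cnbr G u ∩ C₂ ≠ cnbr G v ∩ C₂ := by
          intro h
          have : w ∈ cnbr G v ∩ C₂ := h ▸ ⟨hw1, Set.mem_insert _ _⟩
          exact hw2 this.1
        have hsub : (Set.range fun x => cnbr G x ∩ C) ⊆
            (fun s => s ∩ C) '' ((Set.range fun x => cnbr G x ∩ C₂) \ {cnbr G v ∩ C₂}) := by
          rintro s ⟨x, rfl⟩
          by_cases hx : cnbr G x ∩ C₂ = cnbr G v ∩ C₂
          · refine ⟨cnbr G u ∩ C₂, ⟨⟨u, rfl⟩, hne₂⟩, ?_⟩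
            have h' : cnbr G x ∩ C = cnbr G v ∩ C := by
              rw [← hgC x, ← hgC v, hx]
            show cnbr G u ∩ C₂ ∩ C = cnbr G x ∩ C
            rw [hgC u, hEq, ← h']
          · exact ⟨cnbr G x ∩ C₂, ⟨⟨x, rfl⟩, hx⟩, hgC x⟩
        have hmemv : (cnbr G v ∩ C₂) ∈ (Set.range fun x => cnbr G x ∩ C₂) := ⟨v, rfl⟩
        have h1 : (Set.range fun x => cnbr G x ∩ C).ncard ≤
            ((Set.range fun x => cnbr G x ∩ C₂) \ {cnbr G v ∩ C₂}).ncard :=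
          le_trans (Set.ncard_le_ncard hsub (Set.toFinite _)) (Set.ncard_image_le (Set.toFinite _))
        have h2 : ((Set.range fun x => cnbr G x ∩ C₂) \ {cnbr G v ∩ C₂}).ncard + 1 =
            (Set.range fun x => cnbr G x ∩ C₂).ncard :=
          Set.ncard_diff_singleton_add_one hmemv (Set.toFinite _)
        have hcard₂ : Fintype.card V ≤ k + (Set.range fun x => cnbr G x ∩ C₂).ncard := by
          omega
        obtain ⟨C', hC', hle⟩ := ih C₂ hdom₂ hcard₂
        refine ⟨C', hC', ?_⟩
        have : C₂.ncard ≤ C.ncard + 1 := Set.ncard_insert_le _ _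
        omega
      obtain ⟨w, hw⟩ := hw
      rcases hw with ⟨hw1, hw2⟩ | ⟨hw1, hw2⟩
      · exact core u v huv hEq w hw1 hw2
      · exact core v u (Ne.symm huv) hEq.symm w hw1 hw2

lemma support_card {V : Type*} (S : Set (Sym2 V)) (hS : S.Finite) :
    {x : V | ∃ e ∈ S, x ∈ e}.ncard ≤ 2 * S.ncard := by
  refine Set.Finite.induction_on
    (motive := fun S _ => {x : V | ∃ e ∈ S, x ∈ e}.ncard ≤ 2 * S.ncard) S hS (by simp) ?_
  intro e S heS hSfin ih
  have hsplit : {x : V | ∃ f ∈ insert e S, x ∈ f} =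
      {x : V | x ∈ e} ∪ {x : V | ∃ f ∈ S, x ∈ f} := by
    ext x
    simp only [Set.mem_setOf_eq, Set.mem_insert_iff, Set.mem_union]
    constructor
    · rintro ⟨f, rfl | hf, hx⟩
      · exact Or.inl hx
      · exact Or.inr ⟨f, hf, hx⟩
    · rintro (hx | ⟨f, hf, hx⟩)
      · exact ⟨e, Or.inl rfl, hx⟩
      · exact ⟨f, Or.inr hf, hx⟩
  have hecard : {x : V | x ∈ e}.ncard ≤ 2 := by
    induction e with
    | _ a b =>
      have : {x : V | x ∈ s(a, b)} = {a, b} := by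
        ext x; simp [Sym2.mem_iff]
      rw [this]
      exact le_trans (Set.ncard_insert_le _ _) (by simp)
  have hins : (insert e S).ncard = S.ncard + 1 := Set.ncard_insert_of_notMem heS hSfin
  calc {x : V | ∃ f ∈ insert e S, x ∈ f}.ncard
      ≤ {x : V | x ∈ e}.ncard + {x : V | ∃ f ∈ S, x ∈ f}.ncard := by
        rw [hsplit]; exact Set.ncard_union_le _ _
    _ ≤ 2 * (insert e S).ncard := by omega

/-- A connected triangle-free graph on at least 3 vertices is identifiable. -/
lemma tf_ident {V : Type*} [Fintype V] (H : SimpleGraph V) (hc : H.Connected)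
    (htf : H.CliqueFree 3) (hn : 3 ≤ Fintype.card V) :
    ∀ a b : V, cnbr H a = cnbr H b → a = b := by
  classical
  intro a b h
  by_contra hne
  have hadj : H.Adj a b := by
    have ha : a ∈ cnbr H b := h ▸ Set.mem_insert a _
    rcases ha with h' | h'
    · exact absurd h' hne
    · exact (H.mem_neighborSet b a).mp h' |>.symm
  have hsubset : ∀ c : V, c ∈ cnbr H a → c ∈ ({a, b} : Set V) := by
    intro c hca
    have hcb : c ∈ cnbr H b := h ▸ hca
    by_contra hcnot
    simp only [Set.mem_insert_iff, Set.mem_singleton_iff, not_or] at hcnot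
    have h1 : H.Adj a c := by
      rcases hca with h' | h'
      · exact absurd h' hcnot.1
      · exact (H.mem_neighborSet a c).mp h'
    have h2 : H.Adj b c := by
      rcases hcb with h' | h'
      · exact absurd h' hcnot.2
      · exact (H.mem_neighborSet b c).mp h'
    exact htf {a, b, c} (is3Clique_triple_iff.mpr ⟨hadj, h1, h2⟩)
  have hsubset' : ∀ c : V, c ∈ cnbr H b → c ∈ ({a, b} : Set V) := by
    intro c hcb
    exact hsubset c (h ▸ hcb)
  -- there is a third vertex
  have hthird : ∃ c : V, c ≠ a ∧ c ≠ b := by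
    by_contra hco
    push_neg at hco
    have : (Finset.univ : Finset V) ⊆ {a, b} := by
      intro x _
      by_cases hxa : x = a
      · simp [hxa]
      · simp [hco x hxa]
    have hle : Fintype.card V ≤ ({a, b} : Finset V).card := by
      rw [← Finset.card_univ]; exact Finset.card_le_card this
    have : ({a, b} : Finset V).card ≤ 2 :=
      le_trans (Finset.card_insert_le _ _) (by simp)
    omega
  obtain ⟨c, hca, hcb⟩ := hthird
  -- walks starting in {a, b} stay in {a, b}
  have hstay : ∀ (x y : V) (_ : H.Walk x y), x ∈ ({a, b} : Set V) → y ∈ ({a, b} : Set V) := by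
    intro x y p
    induction p with
    | nil => exact id
    | cons hadj' p ih =>
      intro hx
      apply ih
      rcases hx with rfl | hx
      · exact hsubset _ (Set.mem_insert_of_mem _ ((H.mem_neighborSet _ _).mpr hadj'))
      · rw [Set.mem_singleton_iff] at hx
        subst hx
        exact hsubset' _ (Set.mem_insert_of_mem _ ((H.mem_neighborSet _ _).mpr hadj'))
  obtain ⟨p⟩ := hc.preconnected a c
  have := hstay a c p (Set.mem_insert _ _)
  rcases this with h' | h'
  · exact hca h'
  · exact hcb h'

theorem stmt_18 {V : Type*} [Fintype V] (G : SimpleGraph V) (Δ t : ℕ)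
    (hconn : G.Connected)
    (hident : ∀ a b : V, cnbr G a = cnbr G b → a = b)
    (hn : 3 ≤ Fintype.card V) (hΔ : 3 ≤ Δ)
    (hdeg : ∀ w : V, (G.neighborSet w).ncard ≤ Δ)
    (E' : Set (Sym2 V)) (hE' : E' ⊆ G.edgeSet) (ht : E'.ncard = t)
    (htf : (G.deleteEdges E').CliqueFree 3)
    (hyp : ∀ H : SimpleGraph V, H.Connected →
      (∀ a b : V, cnbr H a = cnbr H b → a = b) → H.CliqueFree 3 →
      (∀ w : V, (H.neighborSet w).ncard ≤ Δ) →
      (gammaID H : ℚ) ≤ ((Δ : ℚ) - 1) / Δ * Fintype.card V + 1 / Δ) :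
    (gammaID G : ℚ) ≤ ((Δ : ℚ) - 1) / Δ * Fintype.card V + 4 * t + 1 / Δ := by
  classical
  -- choose a minimum-size subset S of E' whose deletion makes G triangle-free
  set P : Set ℕ := {k | ∃ S : Set (Sym2 V), S ⊆ E' ∧ (G.deleteEdges S).CliqueFree 3 ∧
      S.ncard = k} with hP
  have hPne : P.Nonempty := ⟨t, E', subset_rfl, htf, ht⟩
  obtain ⟨S, hSE, hStf, hScard⟩ := Nat.sInf_mem hPne
  have hSfin : S.Finite := Set.toFinite S
  -- G - S is connected: every deleted edge lies in a triangle
  have hGadj : ∀ u v : V, G.Adj u v → (G.deleteEdges S).Reachable u v := by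
    intro u v huv
    by_cases he : s(u, v) ∈ S
    · have hdiff : (S \ {s(u, v)}).ncard + 1 = S.ncard :=
        Set.ncard_diff_singleton_add_one he hSfin
      have hnotf : ¬ (G.deleteEdges (S \ {s(u, v)})).CliqueFree 3 := by
        intro hcf
        have hmem : (S \ {s(u, v)}).ncard ∈ P :=
          ⟨S \ {s(u, v)}, (Set.diff_subset).trans hSE, hcf, rfl⟩
        have := Nat.sInf_le hmem
        omega
      rw [CliqueFree] at hnotf
      push_neg at hnotf
      obtain ⟨T, hT⟩ := hnotf
      rw [is3Clique_iff] at hT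
      obtain ⟨a, b, c, hab, hac, hbc, rfl⟩ := hT
      rw [deleteEdges_adj] at hab hac hbc
      -- helper: if the pair {x,y} is the deleted edge and z is a common neighbor avoiding S
      have step : ∀ x y z : V, s(x, y) = s(u, v) → G.Adj x z → G.Adj y z →
          s(x, z) ∉ S → s(y, z) ∉ S → (G.deleteEdges S).Reachable u v := by
        intro x y z hxy hxz hyz h1 h2
        have r1 : (G.deleteEdges S).Adj x z := deleteEdges_adj.mpr ⟨hxz, h1⟩
        have r2 : (G.deleteEdges S).Adj y z := deleteEdges_adj.mpr ⟨hyz, h2⟩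
        have r : (G.deleteEdges S).Reachable x y := r1.reachable.trans r2.reachable.symm
        rcases Sym2.eq_iff.mp hxy with ⟨rfl, rfl⟩ | ⟨rfl, rfl⟩
        · exact r
        · exact r.symm
      have hne_ab : a ≠ b := hab.1.ne
      have hne_ac : a ≠ c := hac.1.ne
      have hne_bc : b ≠ c := hbc.1.ne
      by_cases h1 : s(a, b) ∈ S
      · have e1 : s(a, b) = s(u, v) := by
          by_contra hne'
          exact hab.2 ⟨h1, hne'⟩
        have hac' : s(a, c) ∉ S := by
          intro hmem
          have : s(a, c) = s(u, v) := by
            by_contra hne'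
            exact hac.2 ⟨hmem, hne'⟩
          rw [← e1] at this
          rcases Sym2.eq_iff.mp this with ⟨_, h'⟩ | ⟨h', h''⟩
          · exact hne_bc h'.symm
          · exact hne_ab h'
        have hbc' : s(b, c) ∉ S := by
          intro hmem
          have : s(b, c) = s(u, v) := by
            by_contra hne'
            exact hbc.2 ⟨hmem, hne'⟩
          rw [← e1] at this
          rcases Sym2.eq_iff.mp this with ⟨h', h''⟩ | ⟨h', h''⟩
          · exact hne_ab h'.symm
          · exact hne_ac h''.symm
        exact step a b c e1 hac.1 hbc.1 hac' hbc'
      · by_cases h2 : s(a, c) ∈ S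
        · have e1 : s(a, c) = s(u, v) := by
            by_contra hne'
            exact hac.2 ⟨h2, hne'⟩
          have hcb' : s(c, b) ∉ S := by
            intro hmem
            have heq : s(c, b) = s(u, v) := by
              by_contra hne'
              have : s(b, c) = s(c, b) := Sym2.eq_swap
              exact hbc.2 ⟨this ▸ hmem, this ▸ hne'⟩
            rw [← e1] at heq
            rcases Sym2.eq_iff.mp heq with ⟨h', h''⟩ | ⟨h', h''⟩
            · exact hne_ac h'.symm
            · exact hne_ab h''.symm
          exact step a c b e1 hab.1 hbc.1.symm h1 hcb'
        · by_cases h3 : s(b, c) ∈ S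
          · have e1 : s(b, c) = s(u, v) := by
              by_contra hne'
              exact hbc.2 ⟨h3, hne'⟩
            have hba' : s(b, a) ∉ S := by
              intro hmem
              have : s(a, b) = s(b, a) := Sym2.eq_swap
              exact h1 (this ▸ hmem)
            have hca' : s(c, a) ∉ S := by
              intro hmem
              have : s(a, c) = s(c, a) := Sym2.eq_swap
              exact h2 (this ▸ hmem)
            exact step b c a e1 hab.1.symm hac.1.symm hba' hca'
          · exfalso
            refine hStf {a, b, c} (is3Clique_triple_iff.mpr ⟨?_, ?_, ?_⟩)
            · exact deleteEdges_adj.mpr ⟨hab.1, h1⟩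
            · exact deleteEdges_adj.mpr ⟨hac.1, h2⟩
            · exact deleteEdges_adj.mpr ⟨hbc.1, h3⟩
    · exact (deleteEdges_adj.mpr ⟨huv, he⟩).reachable
  have hpre : (G.deleteEdges S).Preconnected := by
    intro x y
    obtain ⟨p⟩ := hconn.preconnected x y
    induction p with
    | nil => exact Reachable.refl _
    | cons h p ih => exact (hGadj _ _ h).trans ih
  have hconn'' : (G.deleteEdges S).Connected := by
    have : Nonempty V := hconn.nonempty
    exact Connected.mk hpre
  have hident'' := tf_ident (G.deleteEdges S) hconn'' hStf hn
  have hdeg'' : ∀ w : V, ((G.deleteEdges S).neighborSet w).ncard ≤ Δ := by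
    intro w
    refine le_trans (Set.ncard_le_ncard ?_ (Set.toFinite _)) (hdeg w)
    intro x hx
    exact ((deleteEdges_adj).mp hx).1
  have hbound := hyp (G.deleteEdges S) hconn'' hident'' hStf hdeg''
  -- get an optimal identifying code of G - S
  have hcodesne : {n | ∃ C : Set V, IsIdCode (G.deleteEdges S) C ∧ C.ncard = n}.Nonempty := by
    refine ⟨(Set.univ : Set V).ncard, Set.univ, ⟨fun v => ⟨v, Set.mem_insert _ _,
      Set.mem_univ _⟩, fun u v h => hident'' u v ?_⟩, rfl⟩
    simpa using h
  obtain ⟨C, hC, hCcard⟩ := Nat.sInf_mem hcodesne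
  -- C dominates in G
  have hdomG : ∀ v, (cnbr G v ∩ C).Nonempty := fun v =>
    (hC.1 v).mono (Set.inter_subset_inter_left _ (cnbr_mono (deleteEdges_le S) v))
  -- counting: traces of non-endpoints are distinct
  set supp : Set V := {x : V | ∃ e ∈ S, x ∈ e} with hsuppdef
  have hsuppcard : supp.ncard ≤ 2 * S.ncard := support_card S hSfin
  have hinjOn : Set.InjOn (fun v => cnbr G v ∩ C) suppᶜ := by
    intro x hx y hy hxy
    have hxS : ∀ e ∈ S, x ∉ e := by
      intro e he hmem
      exact hx ⟨e, he, hmem⟩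
    have hyS : ∀ e ∈ S, y ∉ e := by
      intro e he hmem
      exact hy ⟨e, he, hmem⟩
    apply hC.2
    rw [cnbr_deleteEdges_of_not_mem hxS, cnbr_deleteEdges_of_not_mem hyS]
    exact hxy
  have hcardV : Fintype.card V ≤ 2 * S.ncard + (Set.range fun v => cnbr G v ∩ C).ncard := by
    have h1 : suppᶜ.ncard ≤ (Set.range fun v => cnbr G v ∩ C).ncard := by
      rw [← Set.ncard_image_of_injOn hinjOn]
      exact Set.ncard_le_ncard (Set.image_subset_range _ _) (Set.toFinite _)
    have h2 : supp.ncard + suppᶜ.ncard = Fintype.card V := by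
      rw [Set.ncard_add_ncard_compl, Nat.card_eq_fintype_card]
    omega
  obtain ⟨C', hC', hC'card⟩ := completion G hident (2 * S.ncard) C hdomG hcardV
  have hγ : gammaID G ≤ C'.ncard := Nat.sInf_le ⟨C', hC', rfl⟩
  have hSt : S.ncard ≤ t := ht ▸ Set.ncard_le_ncard hSE (Set.toFinite _)
  have hnat : gammaID G ≤ gammaID (G.deleteEdges S) + 2 * t := by
    have : C.ncard = gammaID (G.deleteEdges S) := hCcard
    omega
  have hq : (gammaID G : ℚ) ≤ (gammaID (G.deleteEdges S) : ℚ) + 2 * t := by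
    exact_mod_cast hnat
  have ht0 : (0 : ℚ) ≤ t := by positivity
  linarith
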